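/- Let E and E' be non-CM elliptic curves over a field k of characteristic 0 that are isogenous over the algebraic closure. Then the group of Galois-invariant elements of Hom(Ē, Ē')/n is cyclic of order n if E and E' are isogenous over k, and cyclic of order gcd(2,n) otherwise. -/

import Mathlib

/-- Let `E` and `E'` be non-CM elliptic curves over a field `k` of
characteristic `0` that are isogenous over the algebraic closure.  The geometric Hom group
`Hom(Ē, Ē')` is infinite cyclic, generated by a cyclic isogeny `φ`, and the absolute Galois
group `Γ = Gal(k̄/k)` acts on it through a character `χ : Γ →* ℤˣ = {±1}` which is trivial
exactly when `E` and `E'` are isogenous over `k`.  The theorem asserts that the group of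
Galois-invariant elements of `Hom(Ē, Ē')/n ≅ ℤ/nℤ` (with `Γ` acting through `χ`) is cyclic
of order `n` if `E` and `E'` are `k`-isogenous (i.e. `χ = 1`), and cyclic of order
`gcd(2, n)` otherwise (i.e. when `χ ≠ 1`). -/
theorem galois_invariants_of_geometric_hom_mod_n
    (k : Type) [Field k] [CharZero k]
    (Γ : Type) [Group Γ]              -- the absolute Galois group of `k`
    (χ : Γ →* ℤˣ)                     -- the character through which `Γ` acts on `Hom(Ē,Ē') ≅ ℤφ`
    (n : ℕ) (hn : 0 < n)
    (H : AddSubgroup (ZMod n))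
    (hH : (H : Set (ZMod n)) = {m : ZMod n | ∀ σ : Γ, ((χ σ : ℤ)) • m = m}) :
    (χ = 1 → Nonempty (H ≃+ ZMod n)) ∧ (χ ≠ 1 → Nonempty (H ≃+ ZMod (Nat.gcd 2 n))) := by
  have : NeZero n := ⟨hn.ne'⟩
  have hmem : ∀ m : ZMod n, m ∈ H ↔ ∀ σ : Γ, ((χ σ : ℤ)) • m = m := by
    intro m
    rw [← SetLike.mem_coe, hH]; rfl
  constructor
  · -- χ = 1 : invariants are everything
    intro hχ
    have hHtop : H = ⊤ := by
      ext m
      simp only [AddSubgroup.mem_top, iff_true, hmem]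
      intro σ
      simp [hχ]
    subst hHtop
    exact ⟨AddSubgroup.topEquiv⟩
  · -- χ ≠ 1 : invariants are the 2-torsion
    intro hχ
    obtain ⟨σ, hσ⟩ : ∃ σ : Γ, χ σ ≠ 1 := by
      by_contra h
      push_neg at h
      exact hχ (MonoidHom.ext fun σ => h σ)
    have hσ' : χ σ = -1 := (Int.units_eq_one_or (χ σ)).resolve_left hσ
    -- membership in H is exactly 2-torsion
    have hmem2 : ∀ m : ZMod n, m ∈ H ↔ m + m = 0 := by
      intro m
      rw [hmem]
      constructor
      · intro h
        have h1 := h σ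
        rw [hσ'] at h1
        have hneg : -m = m := by simpa using h1
        exact neg_eq_iff_add_eq_zero.mp hneg
      · intro h2 τ
        rcases Int.units_eq_one_or (χ τ) with h | h
        · simp [h]
        · have hneg : -m = m := by
            rw [neg_eq_iff_add_eq_zero, h2]
          simp [h, hneg]
    rcases Nat.even_or_odd n with he | ho
    · -- n even : H = zmultiples (n/2), cyclic of order 2 = gcd 2 n
      have hg : Nat.gcd 2 n = 2 := Nat.gcd_eq_left ((even_iff_two_dvd).mp he)
      set c : ZMod n := ((n / 2 : ℕ) : ZMod n) with hc
      have hn2 : 2 * (n / 2) = n := Nat.two_mul_div_two_of_even he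
      have hcc : c + c = 0 := by
        rw [hc, ← Nat.cast_add, ← two_mul, hn2, ZMod.natCast_self]
      have hc0 : c ≠ 0 := by
        intro h0
        rw [hc, ZMod.natCast_eq_zero_iff] at h0
        have h1 : 0 < n / 2 := Nat.div_pos (by omega) (by norm_num)
        have h2 : n / 2 < n := Nat.div_lt_self hn (by norm_num)
        exact absurd (Nat.le_of_dvd h1 h0) (by omega)
      have hHz : H = AddSubgroup.zmultiples c := by
        ext m
        rw [hmem2]
        constructor
        · intro h2
          have hdvd : n ∣ 2 * m.val := by
            have : ((2 * m.val : ℕ) : ZMod n) = 0 := by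
              push_cast
              rw [ZMod.natCast_val, ZMod.cast_id, two_mul, h2]
            exact (ZMod.natCast_eq_zero_iff _ _).mp this
          have hlt : m.val < n := ZMod.val_lt m
          -- 2 * m.val is 0 or n
          have : m.val = 0 ∨ m.val = n / 2 := by
            rcases hdvd with ⟨t, ht⟩
            have h1 : n * t < n * 2 := by omega
            have h2 : t < 2 := Nat.lt_of_mul_lt_mul_left h1
            interval_cases t
            · left; omega
            · right; omega
          rcases this with h0 | hh
          · have : m = 0 := by
              have := ZMod.natCast_val (R := ZMod n) m
              rw [h0] at this
              simpa using this.symm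
            rw [this]; exact zero_mem _
          · have : m = c := by
              rw [hc, ← hh, ZMod.natCast_val, ZMod.cast_id]
            rw [this]
            exact AddSubgroup.mem_zmultiples c
        · intro hm
          obtain ⟨t, ht⟩ := hm
          rw [← ht]
          have : (t • c) + (t • c) = t • (c + c) := by
            rw [smul_add]
          rw [this, hcc, smul_zero]
      subst hHz
      have hord : addOrderOf c = 2 := by
        apply addOrderOf_eq_prime
        · rw [two_nsmul]; exact hcc
        · exact hc0
      have hcard : Nat.card (AddSubgroup.zmultiples c) = Nat.card (ZMod (Nat.gcd 2 n)) := by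
        rw [Nat.card_zmultiples, hord, hg, Nat.card_zmod]
      exact ⟨addEquivOfAddCyclicCardEq hcard⟩
    · -- n odd : H = ⊥, gcd 2 n = 1
      have hg : Nat.gcd 2 n = 1 := Nat.Coprime.gcd_eq_one (Nat.coprime_two_left.mpr ho)
      have hHbot : H = ⊥ := by
        rw [eq_bot_iff]
        intro m hm
        rw [hmem2] at hm
        have h2 : 2 • m = 0 := by rw [two_nsmul]; exact hm
        have hd2 : addOrderOf m ∣ 2 := addOrderOf_dvd_of_nsmul_eq_zero h2
        have hdn : addOrderOf m ∣ n := by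
          apply addOrderOf_dvd_of_nsmul_eq_zero
          rw [← Nat.cast_smul_eq_nsmul (ZMod n), ZMod.natCast_self, zero_smul]
        have hd1 : addOrderOf m ∣ 1 := hg ▸ Nat.dvd_gcd hd2 hdn
        have : (1 : ℕ) • m = 0 := addOrderOf_dvd_iff_nsmul_eq_zero.mp hd1
        simpa using this
      subst hHbot
      rw [hg]
      exact ⟨AddEquiv.ofUnique⟩
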